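/- (Fractional Poincaré inequality, modular form) Let Ω ⊂ ℝⁿ be open and bounded with diameter d, let G be a Young function and s ∈ (0,1). Then for every measurable u : ℝⁿ → ℝ vanishing outside Ω, ∫_Ω G(|u(x)|/(2C d^s)) dx ≤ ∫∫_{ℝⁿ×ℝⁿ} G(|u(x)−u(y)|/|x−y|^s) dx dy/|x−y|ⁿ, where C := max{1, 2s/(n ω_n)} and ω_n is the volume of the unit ball. -/

import Mathlib

open MeasureTheory

private lemma aux_exp {x : ℝ} (hx0 : 0 ≤ x) (hx1 : x ≤ 1) :
    (2:ℝ) ^ (-x) ≤ 1 - x / 2 := by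
  have h := convexOn_exp.2 (Set.mem_univ (0:ℝ)) (Set.mem_univ (-Real.log 2))
    (by linarith : (0:ℝ) ≤ 1 - x) hx0 (by ring)
  simp only [smul_eq_mul, mul_zero, zero_add, Real.exp_zero, mul_one] at h
  have h2 : Real.exp (-Real.log 2) = 1/2 := by
    rw [Real.exp_neg, Real.exp_log two_pos]; norm_num
  rw [h2] at h
  have h3 : (2:ℝ) ^ (-x) = Real.exp (Real.log 2 * (-x)) := by
    rw [Real.rpow_def_of_pos two_pos]
  have h4 : Real.log 2 * (-x) = x * (-Real.log 2) := by ring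
  rw [h3, h4]
  calc Real.exp (x * (-Real.log 2)) ≤ (1 - x) + x * (1/2) := h
  _ = 1 - x/2 := by ring

private lemma aux_L1 {n : ℕ} (hn : 0 < n) {s : ℝ} (hs0 : 0 < s) {K : ℕ}
    (hK : (n:ℝ) ≤ s * K) :
    (n:ℝ) / (2*s) ≤ (K:ℝ) * (1 - (2:ℝ) ^ (-((n:ℝ)/(s*K)))) := by
  have hn' : (0:ℝ) < n := by exact_mod_cast hn
  have hK0 : (0:ℝ) < K := by nlinarith [Nat.cast_nonneg (α := ℝ) K]
  set x : ℝ := (n:ℝ)/(s*K) with hx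
  have hx0 : 0 ≤ x := by positivity
  have hx1 : x ≤ 1 := by
    rw [hx, div_le_one (by positivity)]; exact hK
  have he := aux_exp hx0 hx1
  have hxK : (K:ℝ) * x = (n:ℝ)/s := by
    rw [hx]; field_simp
  have h5 : (n:ℝ)/(2*s) = ((n:ℝ)/s)/2 := by ring
  nlinarith [mul_le_mul_of_nonneg_left he hK0.le]

set_option maxHeartbeats 2000000 in
theorem fractional_poincare_modular (n : ℕ) (hn : 0 < n)
    (Ω : Set (EuclideanSpace ℝ (Fin n)))
    (hΩopen : IsOpen Ω) (hΩbdd : Bornology.IsBounded Ω) (hΩne : Ω.Nonempty)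
    (s : ℝ) (hs0 : 0 < s) (hs1 : s < 1)
    (G : ℝ → ℝ) (hconv : ConvexOn ℝ (Set.Ici 0) G) (hG0 : G 0 = 0)
    (hGmono : MonotoneOn G (Set.Ici 0))
    (u : EuclideanSpace ℝ (Fin n) → ℝ) (hu : Measurable u)
    (hu0 : ∀ x ∉ Ω, u x = 0) :
    (∫⁻ x in Ω, ENNReal.ofReal
        (G (|u x| / (2 * (max 1 (2 * s / (n * (volume (Metric.ball (0 : EuclideanSpace ℝ (Fin n)) 1)).toReal)))
            * (Metric.diam Ω) ^ s))))
      ≤ ∫⁻ x, ∫⁻ y, ENNReal.ofReal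
          (G (|u x - u y| / ‖x - y‖ ^ s) / ‖x - y‖ ^ n) := by
  classical
  set ω : ℝ := (volume (Metric.ball (0 : EuclideanSpace ℝ (Fin n)) 1)).toReal with hω_def
  set d : ℝ := Metric.diam Ω with hd_def
  set C : ℝ := max 1 (2 * s / (n * ω)) with hC_def
  have hGnonneg : ∀ t : ℝ, 0 ≤ t → 0 ≤ G t := by
    intro t ht
    have := hGmono Set.self_mem_Ici (Set.mem_Ici.mpr ht) ht
    rwa [hG0] at this
  rcases eq_or_lt_of_le (Metric.diam_nonneg (s := Ω)) with hd0 | hd0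
  · -- degenerate case : diam = 0
    have hz : ∀ x : EuclideanSpace ℝ (Fin n), G (|u x| / (2 * C * d ^ s)) = 0 := by
      intro x
      have hdz : d = 0 := hd_def.trans hd0.symm
      rw [hdz, Real.zero_rpow hs0.ne', mul_zero, div_zero, hG0]
    simp only [hz, ENNReal.ofReal_zero, lintegral_zero]
    exact zero_le
  -- main case
  replace hd0 : 0 < d := hd0
  have hω0 : 0 < ω := ENNReal.toReal_pos
    (Metric.measure_ball_pos volume _ one_pos).ne' measure_ball_lt_top.ne
  have hball : volume (Metric.ball (0 : EuclideanSpace ℝ (Fin n)) 1) = ENNReal.ofReal ω := by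
    rw [hω_def, ENNReal.ofReal_toReal measure_ball_lt_top.ne]
  have hC1 : 1 ≤ C := le_max_left _ _
  have hC0 : 0 < C := lt_of_lt_of_le one_pos hC1
  set K : ℕ := n * ⌈s⁻¹⌉₊ with hK_def
  have hKpos : 0 < K := Nat.mul_pos hn (Nat.ceil_pos.mpr (by positivity))
  have hK0cast : (0:ℝ) < K := by exact_mod_cast hKpos
  have hsK : (n:ℝ) ≤ s * K := by
    have h1 : s⁻¹ ≤ (⌈s⁻¹⌉₊ : ℝ) := Nat.le_ceil _
    have h2 : (K:ℝ) = (n:ℝ) * (⌈s⁻¹⌉₊ : ℝ) := by rw [hK_def]; push_cast; ring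
    rw [h2]
    have h1' : (0:ℝ) ≤ (⌈s⁻¹⌉₊ : ℝ) - s⁻¹ := sub_nonneg.mpr h1
    have h2' : (0:ℝ) ≤ s * (n:ℝ) := by positivity
    have h3 : s * (n:ℝ) * s⁻¹ = (n:ℝ) := by field_simp
    nlinarith [mul_nonneg h2' h1', h3]
  have hsK0 : 0 < s * (K:ℝ) := by positivity
  set l : ℝ := (2:ℝ) ^ ((s * (K:ℝ))⁻¹) with hl_def
  have hl1 : 1 ≤ l := Real.one_le_rpow one_le_two (by positivity)
  have hl0 : 0 < l := lt_of_lt_of_le one_pos hl1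
  have hlpow : ∀ k : ℕ, (l:ℝ) ^ k = (2:ℝ) ^ ((k:ℝ) / (s*(K:ℝ))) := by
    intro k
    rw [← Real.rpow_natCast l k, hl_def, ← Real.rpow_mul (by norm_num : (0:ℝ) ≤ 2)]
    rw [inv_mul_eq_div]
  have hl2 : ∀ k : ℕ, k ≤ K → ((l ^ k : ℝ)) ^ s ≤ 2 := by
    intro k hk
    rw [hlpow k, ← Real.rpow_mul (by norm_num : (0:ℝ) ≤ 2)]
    have h3 : (k:ℝ)/(s*(K:ℝ))*s = (k:ℝ)/(K:ℝ) := by field_simp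
    rw [h3]
    calc (2:ℝ)^((k:ℝ)/(K:ℝ)) ≤ 2^(1:ℝ) := by
          apply Real.rpow_le_rpow_of_exponent_le one_le_two
          rw [div_le_one hK0cast]; exact_mod_cast hk
    _ = 2 := Real.rpow_one 2
  have hln : (l⁻¹ : ℝ) ^ n = (2:ℝ) ^ (-((n:ℝ)/(s*(K:ℝ)))) := by
    rw [inv_pow, hlpow n, Real.rpow_neg (by norm_num : (0:ℝ) ≤ 2)]
  have hCle : 2*s/((n:ℝ)*ω) ≤ C := le_max_right _ _
  clear_value d ω C K l
  clear hω_def hC_def hK_def hl_def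
  -- pointwise convexity estimate
  have hpoint : ∀ t : ℝ, 0 ≤ t →
      G (t / (2*C*d^s)) ≤ (K:ℝ) * (ω * ((1 - l⁻¹^n) * G (t / (2*d^s)))) := by
    intro t ht
    have hds : (0:ℝ) < d ^ s := Real.rpow_pos_of_pos hd0 s
    have ha0 : 0 ≤ t / (2*d^s) := by positivity
    have heq : t / (2*C*d^s) = C⁻¹ * (t/(2*d^s)) := by
      field_simp
    have hca : (0:ℝ) ≤ C⁻¹ := by positivity
    have hcb : (0:ℝ) ≤ 1 - C⁻¹ := by
      have h9 : C⁻¹ ≤ 1 := inv_le_one_of_one_le₀ hC1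
      linarith
    have hcab : C⁻¹ + (1 - C⁻¹) = 1 := by ring
    have hconvx := hconv.2 (Set.mem_Ici.mpr ha0) (Set.self_mem_Ici) hca hcb hcab
    simp only [smul_eq_mul, mul_zero, add_zero, hG0] at hconvx
    rw [heq]
    refine le_trans hconvx ?_
    have hGa : 0 ≤ G (t/(2*d^s)) := hGnonneg _ ha0
    have hCinv : C⁻¹ ≤ (n:ℝ) * ω / (2*s) := by
      have h1 : 2*s/((n:ℝ)*ω) ≤ C := hCle
      have h2 : (0:ℝ) < 2*s/((n:ℝ)*ω) := by
        have : (0:ℝ) < n := by exact_mod_cast hn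
        positivity
      calc C⁻¹ ≤ (2*s/((n:ℝ)*ω))⁻¹ := inv_anti₀ h2 h1
      _ = (n:ℝ)*ω/(2*s) := by
          rw [inv_div]
    have hL1 := aux_L1 hn hs0 hsK
    rw [← hln] at hL1
    calc C⁻¹ * G (t/(2*d^s)) ≤ ((n:ℝ)*ω/(2*s)) * G (t/(2*d^s)) := by
          nlinarith [mul_nonneg (sub_nonneg.mpr hCinv) hGa]
    _ = ((n:ℝ)/(2*s)) * (ω * G (t/(2*d^s))) := by ring
    _ ≤ ((K:ℝ) * (1 - l⁻¹^n)) * (ω * G (t/(2*d^s))) := by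
          nlinarith [mul_nonneg (sub_nonneg.mpr hL1) (mul_nonneg hω0.le hGa)]
    _ = (K:ℝ) * (ω * ((1 - l⁻¹^n) * G (t/(2*d^s)))) := by ring
  -- the annuli
  set A : ℕ → EuclideanSpace ℝ (Fin n) → Set (EuclideanSpace ℝ (Fin n)) :=
    fun k x => Metric.closedBall x (l^(k+1) * d) \ Metric.closedBall x (l^k * d) with hA_def
  have hAmeas : ∀ (k : ℕ) (x : EuclideanSpace ℝ (Fin n)), MeasurableSet (A k x) := by
    intro k x
    simp only [hA_def]
    exact measurableSet_closedBall.diff measurableSet_closedBall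
  have hvol : ∀ (k:ℕ) (x : EuclideanSpace ℝ (Fin n)),
      volume (A k x) = ENNReal.ofReal ((l^(k+1)*d)^n * ω - (l^k*d)^n * ω) := by
    intro k x
    have h1 : (0:ℝ) ≤ l^k * d := by positivity
    have h2 : (0:ℝ) ≤ l^(k+1) * d := by positivity
    have hle : l^k ≤ l^(k+1) := pow_le_pow_right₀ hl1 (Nat.le_succ k)
    have hsub : Metric.closedBall x (l^k*d) ⊆ Metric.closedBall x (l^(k+1)*d) :=
      Metric.closedBall_subset_closedBall (mul_le_mul_of_nonneg_right hle hd0.le)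
    simp only [hA_def]
    rw [measure_diff hsub measurableSet_closedBall.nullMeasurableSet
        measure_closedBall_lt_top.ne,
      Measure.addHaar_closedBall _ _ h2, Measure.addHaar_closedBall _ _ h1,
      finrank_euclideanSpace_fin, hball,
      ← ENNReal.ofReal_mul (by positivity), ← ENNReal.ofReal_mul (by positivity),
      ← ENNReal.ofReal_sub _ (by positivity)]
  -- per annulus estimate
  have hannulus : ∀ x ∈ Ω, ∀ k : ℕ, k+1 ≤ K →
      ENNReal.ofReal (ω * ((1 - l⁻¹^n) * G (|u x| / (2*d^s)))) ≤
        ∫⁻ y in A k x, ENNReal.ofReal (G (|u x - u y| / ‖x-y‖^s) / ‖x-y‖^n) := by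
    intro x hx k hk
    have hds : (0:ℝ) < d ^ s := Real.rpow_pos_of_pos hd0 s
    have hRpos : (0:ℝ) < l^(k+1)*d := by positivity
    set creal : ℝ := G (|u x| / (2*d^s)) / (l^(k+1)*d)^n with hcreal_def
    have hc0 : 0 ≤ creal := div_nonneg (hGnonneg _ (by positivity)) (by positivity)
    have hstep : ∀ y ∈ A k x, ENNReal.ofReal creal ≤
        ENNReal.ofReal (G (|u x - u y| / ‖x-y‖^s) / ‖x-y‖^n) := by
      intro y hy
      simp only [hA_def, Set.mem_diff, Metric.mem_closedBall, not_le] at hy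
      obtain ⟨hy1, hy2⟩ := hy
      have hr : ‖x - y‖ = dist y x := by rw [dist_comm, dist_eq_norm]
      have hlk1 : (1:ℝ) ≤ l^k := by
        calc (1:ℝ) = l^0 := (pow_zero l).symm
        _ ≤ l^k := pow_le_pow_right₀ hl1 (Nat.zero_le k)
      have hr0 : 0 < ‖x - y‖ := by
        rw [hr]; exact lt_of_le_of_lt (by positivity) hy2
      have hyΩ : y ∉ Ω := by
        intro hyΩ
        have hdy : dist y x ≤ d := by rw [hd_def]; exact Metric.dist_le_diam_of_mem hΩbdd hyΩ hx
        have h1 : d ≤ l^k * d := le_mul_of_one_le_left hd0.le hlk1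
        linarith
      rw [hu0 y hyΩ, sub_zero]
      apply ENNReal.ofReal_le_ofReal
      have hnum : |u x| / (2*d^s) ≤ |u x| / ‖x-y‖^s := by
        apply div_le_div_of_nonneg_left (abs_nonneg _) (Real.rpow_pos_of_pos hr0 s)
        calc ‖x-y‖^s ≤ (l^(k+1)*d)^s := by
              apply Real.rpow_le_rpow hr0.le (by rw [hr]; exact hy1) hs0.le
        _ = (l^(k+1))^s * d^s := Real.mul_rpow (by positivity) hd0.le
        _ ≤ 2 * d^s := by
              nlinarith [mul_nonneg (sub_nonneg.mpr (hl2 (k+1) hk)) hds.le]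
      have hGnum : G (|u x| / (2*d^s)) ≤ G (|u x| / ‖x-y‖^s) :=
        hGmono (Set.mem_Ici.mpr (by positivity)) (Set.mem_Ici.mpr (by positivity)) hnum
      rw [hcreal_def]
      apply div_le_div₀ (hGnonneg _ (by positivity)) hGnum (pow_pos hr0 n)
      apply pow_le_pow_left₀ hr0.le (by rw [hr]; exact hy1)
    calc ENNReal.ofReal (ω * ((1 - l⁻¹^n) * G (|u x|/(2*d^s))))
        = ENNReal.ofReal creal * volume (A k x) := by
          rw [hvol k x, ← ENNReal.ofReal_mul hc0]
          congr 1
          rw [hcreal_def]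
          field_simp
          have hln1 : l ^ n * l⁻¹ ^ n = 1 := by rw [← mul_pow, mul_inv_cancel₀ hl0.ne', one_pow]
          linear_combination (-(l ^ (n * k) * G (|u x| / (2 * d ^ s)) * d ^ n)) * hln1
    _ = ∫⁻ _ in A k x, ENNReal.ofReal creal := (setLIntegral_const _ _).symm
    _ ≤ ∫⁻ y in A k x, ENNReal.ofReal (G (|u x - u y| / ‖x-y‖^s) / ‖x-y‖^n) :=
          setLIntegral_mono' (hAmeas k x) hstep
  -- summing over annuli
  have hinner : ∀ x ∈ Ω,
      ENNReal.ofReal ((K:ℝ) * (ω * ((1 - l⁻¹^n) * G (|u x| / (2*d^s))))) ≤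
        ∫⁻ y, ENNReal.ofReal (G (|u x - u y| / ‖x-y‖^s) / ‖x-y‖^n) := by
    intro x hx
    have hdisj : Set.PairwiseDisjoint (↑(Finset.range K)) (fun k => A k x) := by
      have key : ∀ i j : ℕ, i < j → Disjoint (A i x) (A j x) := by
        intro i j hij
        have hle : l^(i+1) ≤ l^j := pow_le_pow_right₀ hl1 hij
        have hsub : Metric.closedBall x (l^(i+1)*d) ⊆ Metric.closedBall x (l^j*d) :=
          Metric.closedBall_subset_closedBall (mul_le_mul_of_nonneg_right hle hd0.le)
        simp only [hA_def]
        exact Set.disjoint_sdiff_right.mono_left ((Set.diff_subset).trans hsub)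
      intro i _ j _ hij
      rcases hij.lt_or_gt with h | h
      · exact key i j h
      · exact (key j i h).symm
    calc ENNReal.ofReal ((K:ℝ) * (ω * ((1 - l⁻¹^n) * G (|u x|/(2*d^s)))))
        = (K:ENNReal) * ENNReal.ofReal (ω * ((1 - l⁻¹^n) * G (|u x|/(2*d^s)))) := by
          rw [ENNReal.ofReal_mul (Nat.cast_nonneg K), ENNReal.ofReal_natCast]
    _ = ∑ k ∈ Finset.range K, ENNReal.ofReal (ω * ((1 - l⁻¹^n) * G (|u x|/(2*d^s)))) := by
          rw [Finset.sum_const, Finset.card_range, nsmul_eq_mul]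
    _ ≤ ∑ k ∈ Finset.range K,
          ∫⁻ y in A k x, ENNReal.ofReal (G (|u x - u y| / ‖x-y‖^s) / ‖x-y‖^n) := by
          apply Finset.sum_le_sum
          intro k hk
          exact hannulus x hx k (Finset.mem_range.mp hk)
    _ = ∫⁻ y in ⋃ k ∈ Finset.range K, A k x,
          ENNReal.ofReal (G (|u x - u y| / ‖x-y‖^s) / ‖x-y‖^n) :=
          (lintegral_biUnion_finset hdisj (fun k _ => hAmeas k x) _).symm
    _ ≤ ∫⁻ y, ENNReal.ofReal (G (|u x - u y| / ‖x-y‖^s) / ‖x-y‖^n) :=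
          setLIntegral_le_lintegral _ _
  -- final assembly
  calc ∫⁻ x in Ω, ENNReal.ofReal (G (|u x| / (2*C*d^s)))
      ≤ ∫⁻ x in Ω, ENNReal.ofReal ((K:ℝ) * (ω * ((1 - l⁻¹^n) * G (|u x|/(2*d^s))))) :=
        lintegral_mono fun x => ENNReal.ofReal_le_ofReal (hpoint (|u x|) (abs_nonneg _))
  _ ≤ ∫⁻ x in Ω, ∫⁻ y, ENNReal.ofReal (G (|u x - u y| / ‖x-y‖^s) / ‖x-y‖^n) :=
        setLIntegral_mono' hΩopen.measurableSet hinner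
  _ ≤ ∫⁻ x, ∫⁻ y, ENNReal.ofReal (G (|u x - u y| / ‖x-y‖^s) / ‖x-y‖^n) :=
        setLIntegral_le_lintegral _ _
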